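/- Let p = 3 and let G be a 3-group acting on a genus-g (g ≥ 2) surface with signature (h; m_1, …, m_l) where every m_i is a power of 3 (each m_i ≥ 3), with Riemann–Hurwitz 2(g-1) = |G|(2h - 2 + Σ(1 - 1/m_i)) and d := 3h - 3 + l ≥ 1. Then |G| ≤ 3(g-1)/d. -/
import Mathlib


/-- A 3-group of order N acting with signature (h; m_1,…,m_l), all periods
powers of 3 (≥ 3), Riemann–Hurwitz 2(g-1) = N(2h - 2 + Σ(1 - 1/m_i)) and dimension
d = 3h - 3 + l ≥ 1, satisfies N ≤ 3(g-1)/d. -/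
theorem three_group_bound (N g d h l : ℕ) (m : Fin l → ℕ)
    (hN : 1 ≤ N) (hg : 2 ≤ g)
    (hm3 : ∀ i, 3 ≤ m i) (hmpow : ∀ i, ∃ k : ℕ, m i = 3 ^ k)
    (hd : 1 ≤ d) (hdim : 3 * (h : ℤ) - 3 + l = d)
    (hRH : 2 * ((g : ℚ) - 1) = N * (2 * (h : ℚ) - 2 + ∑ i, (1 - 1 / (m i : ℚ)))) :
    (N : ℚ) ≤ 3 * ((g : ℚ) - 1) / (d : ℚ) := by
  have hdQ : (d : ℚ) = 3 * h - 3 + l := by exact_mod_cast hdim.symm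
  have hsum : (l : ℚ) * (2 / 3) ≤ ∑ i, (1 - 1 / (m i : ℚ)) := by
    have h1 : ∑ _i : Fin l, (2 / 3 : ℚ) ≤ ∑ i, (1 - 1 / (m i : ℚ)) := by
      apply Finset.sum_le_sum
      intro i _
      have h3 : (3 : ℚ) ≤ (m i : ℚ) := by exact_mod_cast hm3 i
      have hq : 1 / (m i : ℚ) ≤ 1 / 3 := by
        apply one_div_le_one_div_of_le <;> linarith
      linarith
    simpa [Finset.sum_const, mul_comm] using h1
  have hNQ : (0 : ℚ) ≤ (N : ℚ) := by positivity
  have key : (N : ℚ) * d ≤ 3 * ((g : ℚ) - 1) := by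
    rw [hdQ]
    nlinarith [hRH, hsum, mul_le_mul_of_nonneg_left hsum hNQ]
  have hdpos : (0 : ℚ) < (d : ℚ) := by exact_mod_cast hd
  rw [le_div_iff₀ hdpos]
  linarith
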